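/- If L is a Latin square of order n with n ≥ 2, then n² − 3n + 3 ≤ b_L(H_L) ≤ n² − 3n + 2 + ⌊log₂ n⌋, where b_L(H_L) is the lazy burning number of the hypergraph H_L. -/

import Mathlib

open Finset

/-- An entry of a Latin square with rows/columns/symbols indexed by `X`. -/
abbrev Entry (X : Type*) := X × X × X

/-- A line of a Latin square: a tag (0 = row, 1 = column, 2 = symbol) and an index. -/
abbrev Line (X : Type*) := Fin 3 × X

/-- The entry `e` lies on the line `ℓ`. -/
def onLine {X : Type*} (e : Entry X) (ℓ : Line X) : Prop :=
  (ℓ.1 = 0 ∧ e.1 = ℓ.2) ∨ (ℓ.1 = 1 ∧ e.2.1 = ℓ.2) ∨ (ℓ.1 = 2 ∧ e.2.2 = ℓ.2)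

instance {X : Type*} [DecidableEq X] (e : Entry X) (ℓ : Line X) : Decidable (onLine e ℓ) := by
  unfold onLine; infer_instance

/-- `L` is a Latin square (on the full index set `X`). -/
def IsLatin {X : Type*} (L : Finset (Entry X)) : Prop :=
  (∀ r c : X, ∃! s : X, (r, c, s) ∈ L) ∧
  (∀ r s : X, ∃! c : X, (r, c, s) ∈ L) ∧
  (∀ c s : X, ∃! r : X, (r, c, s) ∈ L)

/-- Lazy-burning closure in the hypergraph `H_L`: vertices are the entries of `L`,
hyperedges are the lines of `L`; a vertex burns if it is the unique unburned vertex of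
a hyperedge of size at least 2. -/
inductive BurnedHL {X : Type*} [DecidableEq X] (L S : Finset (Entry X)) : Entry X → Prop
  | init {e : Entry X} : e ∈ S → BurnedHL L S e
  | prop {e : Entry X} (ℓ : Line X) : e ∈ L → onLine e ℓ →
      2 ≤ (L.filter (fun f => onLine f ℓ)).card →
      (∀ f ∈ L, onLine f ℓ → f ≠ e → BurnedHL L S f) → BurnedHL L S e

/-- `S` is a lazy burning set of the hypergraph `H_L`. -/
def IsLazyBurningSetHL {X : Type*} [DecidableEq X] (L S : Finset (Entry X)) : Prop :=
  S ⊆ L ∧ ∀ e ∈ L, BurnedHL L S e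

/-- The lazy burning number of `H_L`. -/
noncomputable def lbHL {X : Type*} [DecidableEq X] (L : Finset (Entry X)) : ℕ :=
  sInf {k | ∃ S : Finset (Entry X), IsLazyBurningSetHL L S ∧ S.card = k}

/-- A cover of `L`: a set of entries of `L` meeting every line. -/
def IsCover {X : Type*} (L C : Finset (Entry X)) : Prop :=
  C ⊆ L ∧ ∀ ℓ : Line X, ∃ e ∈ C, onLine e ℓ

/-- A weak cover-sequence of `L`: each entry lies on a line containing no earlier entry. -/
def IsWeakCoverSeq {X : Type*} (L : Finset (Entry X)) (es : List (Entry X)) : Prop :=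
  (∀ e ∈ es, e ∈ L) ∧
  ∀ i : Fin es.length, ∃ ℓ : Line X, onLine (es.get i) ℓ ∧
    ∀ j : Fin es.length, (j : ℕ) < (i : ℕ) → ¬ onLine (es.get j) ℓ

/-- A cover-sequence of `L`: a weak cover-sequence whose entries form a cover. -/
def IsCoverSeq {X : Type*} (L : Finset (Entry X)) (es : List (Entry X)) : Prop :=
  IsWeakCoverSeq L es ∧ ∀ ℓ : Line X, ∃ e ∈ es, onLine e ℓ

/-- `mcs L`: the maximum length of a cover-sequence of `L`. -/
noncomputable def mcs {X : Type*} (L : Finset (Entry X)) : ℕ :=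
  sSup {d | ∃ es : List (Entry X), IsCoverSeq L es ∧ es.length = d}

/-- `T` is a subsquare of `L`: `T = L ∩ (R × C × S)` with `|R| = |C| = |S|`, and `T`
is itself a Latin square on rows `R`, columns `C`, symbols `S`. -/
def IsSubsquare {X : Type*} [DecidableEq X] (L T : Finset (Entry X)) : Prop :=
  ∃ R C S : Finset X, R.card = C.card ∧ C.card = S.card ∧
    T = L.filter (fun e => e.1 ∈ R ∧ e.2.1 ∈ C ∧ e.2.2 ∈ S) ∧
    (∀ r ∈ R, ∀ c ∈ C, ∃! s, s ∈ S ∧ (r, c, s) ∈ T) ∧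
    (∀ r ∈ R, ∀ s ∈ S, ∃! c, c ∈ C ∧ (r, c, s) ∈ T) ∧
    (∀ c ∈ C, ∀ s ∈ S, ∃! r, r ∈ R ∧ (r, c, s) ∈ T)

/-- `Sq 0 ⊆ Sq 1 ⊆ ⋯ ⊆ Sq α` is a connected chain of subsquares of `L`, from the empty
subsquare through a single entry up to `L` itself. -/
def IsConnectedChain {X : Type*} [DecidableEq X] (L : Finset (Entry X)) (α : ℕ)
    (Sq : ℕ → Finset (Entry X)) : Prop :=
  1 ≤ α ∧ Sq 0 = ∅ ∧ (Sq 1).card = 1 ∧ Sq α = L ∧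
  (∀ i ≤ α, IsSubsquare L (Sq i)) ∧
  (∀ i < α, Sq i ⊆ Sq (i + 1)) ∧
  (∀ i, 1 ≤ i → i ≤ α → ∃ ℓ : Line X,
      (∃ e ∈ Sq i, onLine e ℓ) ∧ ¬(∃ e ∈ Sq (i - 1), onLine e ℓ) ∧
      (∀ T, IsSubsquare L T → Sq (i - 1) ⊆ T → (∃ e ∈ T, onLine e ℓ) → Sq i ⊆ T))

/-- `scc L`: the minimum length of a connected chain of subsquares of `L`. -/
noncomputable def scc {X : Type*} [DecidableEq X] (L : Finset (Entry X)) : ℕ :=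
  sInf {α | ∃ Sq : ℕ → Finset (Entry X), IsConnectedChain L α Sq}

/-- Lazy-burning closure in the 3-uniform hypergraph `H^L`: vertices are the lines of `L`,
and each entry of `L` induces the hyperedge consisting of its three lines. -/
inductive BurnedH3 {X : Type*} (L : Finset (Entry X)) (S : Finset (Line X)) : Line X → Prop
  | init {ℓ : Line X} : ℓ ∈ S → BurnedH3 L S ℓ
  | prop {ℓ : Line X} (e : Entry X) : e ∈ L → onLine e ℓ →
      (∀ ℓ' : Line X, onLine e ℓ' → ℓ' ≠ ℓ → BurnedH3 L S ℓ') → BurnedH3 L S ℓ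

/-- `S` is a lazy burning set of the 3-uniform hypergraph `H^L`. -/
def IsLazyBurningSetH3 {X : Type*} (L : Finset (Entry X)) (S : Finset (Line X)) : Prop :=
  ∀ ℓ : Line X, BurnedH3 L S ℓ

/-- The lazy burning number of `H^L`. -/
noncomputable def lbH3 {X : Type*} (L : Finset (Entry X)) : ℕ :=
  sInf {k | ∃ S : Finset (Line X), IsLazyBurningSetH3 L S ∧ S.card = k}

namespace LSB
open Classical in
noncomputable local instance (priority := low) : ∀ p : Prop, Decidable p := fun _ => Classical.propDecidable _

section Basics
variable {n : ℕ} {L : Finset (Entry (Fin n))}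

lemma onLine_iff {X : Type*} (e : Entry X) (ℓ : Line X) :
    onLine e ℓ ↔ ℓ = (0, e.1) ∨ ℓ = (1, e.2.1) ∨ ℓ = (2, e.2.2) := by
  obtain ⟨t, x⟩ := ℓ
  unfold onLine
  fin_cases t <;> simp [Prod.ext_iff, eq_comm]

lemma onLine_row {X : Type*} (e : Entry X) (r : X) : onLine e ((0 : Fin 3), r) ↔ e.1 = r := by
  rw [onLine_iff]; simp [Prod.ext_iff, eq_comm]

lemma onLine_col {X : Type*} (e : Entry X) (c : X) : onLine e ((1 : Fin 3), c) ↔ e.2.1 = c := by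
  rw [onLine_iff]; simp [Prod.ext_iff, eq_comm]

lemma onLine_sym {X : Type*} (e : Entry X) (s : X) : onLine e ((2 : Fin 3), s) ↔ e.2.2 = s := by
  rw [onLine_iff]; simp [Prod.ext_iff, eq_comm]

lemma entry_eta {X : Type*} (e : Entry X) : (e.1, e.2.1, e.2.2) = e := rfl

-- uniqueness lemmas
lemma eq_rc (hL : IsLatin L) {e f : Entry (Fin n)} (he : e ∈ L) (hf : f ∈ L)
    (h1 : e.1 = f.1) (h2 : e.2.1 = f.2.1) : e = f := by
  obtain ⟨r, c, s⟩ := e; obtain ⟨r', c', s'⟩ := f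
  simp only at h1 h2
  subst h1; subst h2
  have := (hL.1 r c).unique he hf
  subst this; rfl

lemma eq_rs (hL : IsLatin L) {e f : Entry (Fin n)} (he : e ∈ L) (hf : f ∈ L)
    (h1 : e.1 = f.1) (h2 : e.2.2 = f.2.2) : e = f := by
  obtain ⟨r, c, s⟩ := e; obtain ⟨r', c', s'⟩ := f
  simp only at h1 h2
  subst h1; subst h2
  have := (hL.2.1 r s).unique he hf
  subst this; rfl

lemma eq_cs (hL : IsLatin L) {e f : Entry (Fin n)} (he : e ∈ L) (hf : f ∈ L)
    (h1 : e.2.1 = f.2.1) (h2 : e.2.2 = f.2.2) : e = f := by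
  obtain ⟨r, c, s⟩ := e; obtain ⟨r', c', s'⟩ := f
  simp only at h1 h2
  subst h1; subst h2
  have := (hL.2.2 c s).unique he hf
  subst this; rfl

noncomputable def sy (hL : IsLatin L) (r c : Fin n) : Fin n := (hL.1 r c).choose

lemma sy_mem (hL : IsLatin L) (r c : Fin n) : (r, c, sy hL r c) ∈ L :=
  (hL.1 r c).choose_spec.1

lemma sy_eq (hL : IsLatin L) {r c s : Fin n} (h : (r, c, s) ∈ L) : sy hL r c = s :=
  ((hL.1 r c).choose_spec.2 s h).symm


lemma card_row (hL : IsLatin L) (r : Fin n) :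
    (L.filter (fun f => f.1 = r)).card = n := by
  have : (L.filter (fun f => f.1 = r)).card = (Finset.univ : Finset (Fin n)).card := by
    apply Finset.card_bij' (fun f _ => f.2.1) (fun c _ => (r, c, sy hL r c))
    · intro f hf; exact Finset.mem_univ _
    · intro c _; exact Finset.mem_filter.2 ⟨sy_mem hL r c, rfl⟩
    · intro f hf
      simp only [Finset.mem_filter] at hf
      exact eq_rc hL (sy_mem hL r f.2.1) hf.1 hf.2.symm rfl
    · intro c _; rfl
  simpa using this

lemma card_col (hL : IsLatin L) (c : Fin n) :
    (L.filter (fun f => f.2.1 = c)).card = n := by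
  have : (L.filter (fun f => f.2.1 = c)).card = (Finset.univ : Finset (Fin n)).card := by
    apply Finset.card_bij' (fun f _ => f.1) (fun r _ => (r, c, sy hL r c))
    · intro f hf; exact Finset.mem_univ _
    · intro r _; exact Finset.mem_filter.2 ⟨sy_mem hL r c, rfl⟩
    · intro f hf
      simp only [Finset.mem_filter] at hf
      exact eq_rc hL (sy_mem hL f.1 c) hf.1 rfl hf.2.symm
    · intro r _; rfl
  simpa using this

lemma card_sym (hL : IsLatin L) (s : Fin n) :
    (L.filter (fun f => f.2.2 = s)).card = n := by
  have : (L.filter (fun f => f.2.2 = s)).card = (Finset.univ : Finset (Fin n)).card := by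
    apply Finset.card_bij' (fun f _ => f.1)
      (fun r _ => (r, (hL.2.1 r s).choose, s))
    · intro f hf; exact Finset.mem_univ _
    · intro r _; exact Finset.mem_filter.2 ⟨(hL.2.1 r s).choose_spec.1, rfl⟩
    · intro f hf
      simp only [Finset.mem_filter] at hf
      exact eq_rs hL ((hL.2.1 f.1 s).choose_spec.1) hf.1 rfl hf.2.symm
    · intro r _; rfl
  simpa using this

lemma card_line_row (hL : IsLatin L) (x : Fin n) :
    (L.filter (fun f => onLine f ((0 : Fin 3), x))).card = n := by
  rw [Finset.filter_congr (fun f _ => by rw [onLine_row] : ∀ f ∈ L, onLine f ((0:Fin 3), x) ↔ f.1 = x)]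
  exact card_row hL x

lemma card_line_col (hL : IsLatin L) (x : Fin n) :
    (L.filter (fun f => onLine f ((1 : Fin 3), x))).card = n := by
  rw [Finset.filter_congr (fun f _ => by rw [onLine_col] : ∀ f ∈ L, onLine f ((1:Fin 3), x) ↔ f.2.1 = x)]
  exact card_col hL x

lemma card_line_sym (hL : IsLatin L) (x : Fin n) :
    (L.filter (fun f => onLine f ((2 : Fin 3), x))).card = n := by
  rw [Finset.filter_congr (fun f _ => by rw [onLine_sym] : ∀ f ∈ L, onLine f ((2:Fin 3), x) ↔ f.2.2 = x)]
  exact card_sym hL x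

lemma card_line (hL : IsLatin L) (ℓ : Line (Fin n)) :
    (L.filter (fun f => onLine f ℓ)).card = n := by
  obtain ⟨t, x⟩ := ℓ
  fin_cases t
  · exact card_line_row hL x
  · exact card_line_col hL x
  · exact card_line_sym hL x

lemma card_L (hL : IsLatin L) : L.card = n ^ 2 := by
  have : L.card = (Finset.univ : Finset (Fin n × Fin n)).card := by
    apply Finset.card_bij' (fun f _ => (f.1, f.2.1)) (fun p _ => (p.1, p.2, sy hL p.1 p.2))
    · intro f hf; exact Finset.mem_univ _
    · intro p _; exact sy_mem hL p.1 p.2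
    · intro f hf; exact eq_rc hL (sy_mem hL f.1 f.2.1) hf rfl rfl
    · intro p _; rfl
  rw [this]; simp [Finset.card_univ]; ring

end Basics

section Upper
variable {n : ℕ} {L : Finset (Entry (Fin n))}

def rowsOf (l : List (Entry (Fin n))) : Finset (Fin n) := (l.map (·.1)).toFinset
def colsOf (l : List (Entry (Fin n))) : Finset (Fin n) := (l.map (·.2.1)).toFinset
def symsOf (l : List (Entry (Fin n))) : Finset (Fin n) := (l.map (·.2.2)).toFinset

lemma mem_rowsOf {l : List (Entry (Fin n))} {r : Fin n} :
    r ∈ rowsOf l ↔ ∃ e ∈ l, e.1 = r := by simp [rowsOf]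
lemma mem_colsOf {l : List (Entry (Fin n))} {c : Fin n} :
    c ∈ colsOf l ↔ ∃ e ∈ l, e.2.1 = c := by simp [colsOf]
lemma mem_symsOf {l : List (Entry (Fin n))} {s : Fin n} :
    s ∈ symsOf l ↔ ∃ e ∈ l, e.2.2 = s := by simp [symsOf]

lemma rowsOf_cons {e : Entry (Fin n)} {l : List (Entry (Fin n))} :
    rowsOf (e :: l) = insert e.1 (rowsOf l) := by simp [rowsOf]
lemma colsOf_cons {e : Entry (Fin n)} {l : List (Entry (Fin n))} :
    colsOf (e :: l) = insert e.2.1 (colsOf l) := by simp [colsOf]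
lemma symsOf_cons {e : Entry (Fin n)} {l : List (Entry (Fin n))} :
    symsOf (e :: l) = insert e.2.2 (symsOf l) := by simp [symsOf]

/-- Reversed weak cover-sequence: each entry has a line avoiding all later (tail) entries. -/
inductive RevGood (L : Finset (Entry (Fin n))) : List (Entry (Fin n)) → Prop
  | nil : RevGood L []
  | cons {e : Entry (Fin n)} {l : List (Entry (Fin n))} (he : e ∈ L) (hl : RevGood L l)
      (ℓ : Line (Fin n)) (h1 : onLine e ℓ) (h2 : ∀ f ∈ l, ¬ onLine f ℓ) : RevGood L (e :: l)

lemma RevGood.subset {l : List (Entry (Fin n))} (h : RevGood L l) : ∀ e ∈ l, e ∈ L := by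
  induction h with
  | nil => simp
  | cons he hl ℓ h1 h2 ih =>
    intro x hx
    rcases List.mem_cons.1 hx with rfl | hx
    · exact he
    · exact ih x hx

lemma RevGood.nodup {l : List (Entry (Fin n))} (h : RevGood L l) : l.Nodup := by
  induction h with
  | nil => exact List.nodup_nil
  | cons he hl ℓ h1 h2 ih =>
    refine List.nodup_cons.2 ⟨fun hmem => ?_, ih⟩
    exact h2 _ hmem h1

lemma burned_trans {S S' : Finset (Entry (Fin n))} {f : Entry (Fin n)}
    (h : ∀ g ∈ S', BurnedHL L S g) (hf : BurnedHL L S' f) : BurnedHL L S f := by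
  induction hf with
  | init h' => exact h _ h'
  | prop ℓ he hon hcard hall ih => exact BurnedHL.prop ℓ he hon hcard ih

lemma burn_all (hn : 2 ≤ n) (hL : IsLatin L) {l : List (Entry (Fin n))} (hg : RevGood L l) :
    ∀ e ∈ l, BurnedHL L (L \ l.toFinset) e := by
  induction hg with
  | nil => simp
  | @cons e t he hl ℓ h1 h2 ih =>
    have hburn_e : BurnedHL L (L \ (e :: t).toFinset) e := by
      refine BurnedHL.prop ℓ he h1 (by rw [card_line hL]; omega) ?_
      intro f hf hon hne
      refine BurnedHL.init (Finset.mem_sdiff.2 ⟨hf, fun hmem => ?_⟩)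
      rw [List.toFinset_cons, Finset.mem_insert] at hmem
      rcases hmem with rfl | hmem
      · exact hne rfl
      · exact h2 _ (List.mem_toFinset.1 hmem) hon
    intro x hx
    rcases List.mem_cons.1 hx with rfl | hx
    · exact hburn_e
    · refine burned_trans ?_ (ih x hx)
      intro g hg'
      rw [Finset.mem_sdiff, List.mem_toFinset] at hg'
      by_cases hge : g = e
      · exact hge ▸ hburn_e
      · refine BurnedHL.init (Finset.mem_sdiff.2 ⟨hg'.1, fun hmem => ?_⟩)
        rw [List.toFinset_cons, Finset.mem_insert] at hmem
        rcases hmem with rfl | hmem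
        · exact hge rfl
        · exact hg'.2 (List.mem_toFinset.1 hmem)

/-- Closed triple of index sets. -/
def ClosedT (L : Finset (Entry (Fin n))) (R C S : Finset (Fin n)) : Prop :=
  (∀ e ∈ L, e.1 ∈ R → e.2.1 ∈ C → e.2.2 ∈ S) ∧
  (∀ e ∈ L, e.1 ∈ R → e.2.2 ∈ S → e.2.1 ∈ C) ∧
  (∀ e ∈ L, e.2.1 ∈ C → e.2.2 ∈ S → e.1 ∈ R)

lemma singleton_closed (hL : IsLatin L) {r c s : Fin n} (h : (r, c, s) ∈ L) :
    ClosedT L {r} {c} {s} := by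
  refine ⟨?_, ?_, ?_⟩ <;> intro e he h1 h2 <;>
    rw [Finset.mem_singleton] at h1 h2 ⊢
  · have := eq_rc hL he h (by simpa using h1) (by simpa using h2); rw [this]
  · have := eq_rs hL he h (by simpa using h1) (by simpa using h2); rw [this]
  · have := eq_cs hL he h (by simpa using h1) (by simpa using h2); rw [this]

lemma closed_cards (hL : IsLatin L) {A B D : Finset (Fin n)} (hcl : ClosedT L A B D)
    (hA : A.Nonempty) (hB : B.Nonempty) : A.card = D.card ∧ B.card = D.card := by
  obtain ⟨r, hr⟩ := hA
  obtain ⟨c, hc⟩ := hB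
  constructor
  · apply le_antisymm
    · apply Finset.card_le_card_of_injOn (fun x => sy hL x c)
      · intro x hx; exact hcl.1 _ (sy_mem hL x c) hx hc
      · intro x hx y hy hxy
        have := eq_cs hL (sy_mem hL x c) (sy_mem hL y c) rfl hxy
        exact congrArg Prod.fst this
    · apply Finset.card_le_card_of_injOn (fun s => (hL.2.2 c s).choose)
      · intro s hs; exact hcl.2.2 _ (hL.2.2 c s).choose_spec.1 hc hs
      · intro s hs s' hs' hss
        simp only at hss
        have h1 : ((hL.2.2 c s).choose, c, s) ∈ L := (hL.2.2 c s).choose_spec.1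
        have h2 : ((hL.2.2 c s').choose, c, s') ∈ L := (hL.2.2 c s').choose_spec.1
        have h3 := eq_rc hL h1 h2 hss rfl
        simpa using congrArg (fun e => e.2.2) h3
  · apply le_antisymm
    · apply Finset.card_le_card_of_injOn (fun x => sy hL r x)
      · intro x hx; exact hcl.1 _ (sy_mem hL r x) hr hx
      · intro x hx y hy hxy
        have := eq_rs hL (sy_mem hL r x) (sy_mem hL r y) rfl hxy
        simpa using congrArg (fun e => e.2.1) this
    · apply Finset.card_le_card_of_injOn (fun s => (hL.2.1 r s).choose)
      · intro s hs; exact hcl.2.1 _ (hL.2.1 r s).choose_spec.1 hr hs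
      · intro s hs s' hs' hss
        simp only at hss
        have h1 : (r, (hL.2.1 r s).choose, s) ∈ L := (hL.2.1 r s).choose_spec.1
        have h2 : (r, (hL.2.1 r s').choose, s') ∈ L := (hL.2.1 r s').choose_spec.1
        have h3 := eq_rc hL h1 h2 rfl hss
        simpa using congrArg (fun e => e.2.2) h3

lemma ext_lemma (hn : 2 ≤ n) (hL : IsLatin L) {R C S R₀ C₀ S₀ : Finset (Fin n)}
    (hRCS : ClosedT L R C S)
    (hmin : ∀ A B D : Finset (Fin n), ClosedT L A B D → R₀ ⊆ A → C₀ ⊆ B → S₀ ⊆ D →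
      A ⊆ R → B ⊆ C → D ⊆ S → (A = R₀ ∧ B = C₀ ∧ D = S₀) ∨ (A = R ∧ B = C ∧ D = S)) :
    ∀ μ : ℕ, ∀ l : List (Entry (Fin n)), RevGood L l →
    R₀ ⊆ rowsOf l → C₀ ⊆ colsOf l → S₀ ⊆ symsOf l →
    rowsOf l ⊆ R → colsOf l ⊆ C → symsOf l ⊆ S →
    ¬ rowsOf l ⊆ R₀ →
    (R.card - (rowsOf l).card) + (C.card - (colsOf l).card) + (S.card - (symsOf l).card) = μ →
    ∃ l' : List (Entry (Fin n)), RevGood L l' ∧ rowsOf l' = R ∧ colsOf l' = C ∧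
      symsOf l' = S ∧ l'.length = l.length + μ := by
  intro μ
  induction μ with
  | zero =>
    intro l hg h1 h2 h3 h4 h5 h6 h7 hμ
    have c1 := Finset.card_le_card h4
    have c2 := Finset.card_le_card h5
    have c3 := Finset.card_le_card h6
    refine ⟨l, hg, ?_, ?_, ?_, by omega⟩
    · exact Finset.eq_of_subset_of_card_le h4 (by omega)
    · exact Finset.eq_of_subset_of_card_le h5 (by omega)
    · exact Finset.eq_of_subset_of_card_le h6 (by omega)
  | succ μ ih =>
    intro l hg h1 h2 h3 h4 h5 h6 h7 hμ
    by_cases hc1 : ∀ e ∈ L, e.1 ∈ rowsOf l → e.2.1 ∈ colsOf l → e.2.2 ∈ symsOf l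
    · by_cases hc2 : ∀ e ∈ L, e.1 ∈ rowsOf l → e.2.2 ∈ symsOf l → e.2.1 ∈ colsOf l
      · by_cases hc3 : ∀ e ∈ L, e.2.1 ∈ colsOf l → e.2.2 ∈ symsOf l → e.1 ∈ rowsOf l
        · rcases hmin _ _ _ ⟨hc1, hc2, hc3⟩ h1 h2 h3 h4 h5 h6 with ⟨hA, _, _⟩ | ⟨hA, hB, hD⟩
          · exact absurd (hA ▸ Finset.Subset.refl _) h7
          · rw [hA, hB, hD] at hμ; omega
        · -- row line of e is new
          push_neg at hc3; obtain ⟨e, he, he1, he2, he3⟩ := hc3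
          have heR : e.1 ∈ R := hRCS.2.2 _ he (h5 he1) (h6 he2)
          have hgood : RevGood L (e :: l) := by
            refine RevGood.cons he hg ((0 : Fin 3), e.1) ((onLine_row e _).2 rfl) ?_
            intro f hf hon
            exact he3 (mem_rowsOf.2 ⟨f, hf, (onLine_row f _).1 hon⟩)
          have hcols : colsOf (e :: l) = colsOf l := by
            rw [colsOf_cons, Finset.insert_eq_self.2 he1]
          have hsyms : symsOf (e :: l) = symsOf l := by
            rw [symsOf_cons, Finset.insert_eq_self.2 he2]
          have hrows : rowsOf (e :: l) = insert e.1 (rowsOf l) := rowsOf_cons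
          have hcard : (rowsOf (e :: l)).card = (rowsOf l).card + 1 := by
            rw [hrows, Finset.card_insert_of_notMem he3]
          have hsub : rowsOf (e :: l) ⊆ R := by
            rw [hrows]; exact Finset.insert_subset heR h4
          have hle : (rowsOf (e :: l)).card ≤ R.card := Finset.card_le_card hsub
          have h7' : ¬ rowsOf (e :: l) ⊆ R₀ := by
            rw [hrows]; intro hx; exact h7 (fun y hy => hx (Finset.mem_insert_of_mem hy))
          obtain ⟨l', a, b, c, d, hlen⟩ := ih (e :: l) hgood
            (hrows ▸ (h1.trans (Finset.subset_insert _ _))) (hcols ▸ h2) (hsyms ▸ h3)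
            hsub (hcols ▸ h5) (hsyms ▸ h6) h7' (by rw [hcols, hsyms, hcard]; omega)
          exact ⟨l', a, b, c, d, by simp at hlen; omega⟩
      · -- column line of e is new
        push_neg at hc2; obtain ⟨e, he, he1, he2, he3⟩ := hc2
        have heC : e.2.1 ∈ C := hRCS.2.1 _ he (h4 he1) (h6 he2)
        have hgood : RevGood L (e :: l) := by
          refine RevGood.cons he hg ((1 : Fin 3), e.2.1) ((onLine_col e _).2 rfl) ?_
          intro f hf hon
          exact he3 (mem_colsOf.2 ⟨f, hf, (onLine_col f _).1 hon⟩)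
        have hrows : rowsOf (e :: l) = rowsOf l := by
          rw [rowsOf_cons, Finset.insert_eq_self.2 he1]
        have hsyms : symsOf (e :: l) = symsOf l := by
          rw [symsOf_cons, Finset.insert_eq_self.2 he2]
        have hcols : colsOf (e :: l) = insert e.2.1 (colsOf l) := colsOf_cons
        have hcard : (colsOf (e :: l)).card = (colsOf l).card + 1 := by
          rw [hcols, Finset.card_insert_of_notMem he3]
        have hsub : colsOf (e :: l) ⊆ C := by
          rw [hcols]; exact Finset.insert_subset heC h5
        have hle : (colsOf (e :: l)).card ≤ C.card := Finset.card_le_card hsub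
        have h7' : ¬ rowsOf (e :: l) ⊆ R₀ := by rw [hrows]; exact h7
        obtain ⟨l', a, b, c, d, hlen⟩ := ih (e :: l) hgood (hrows ▸ h1)
          (hcols ▸ (h2.trans (Finset.subset_insert _ _))) (hsyms ▸ h3)
          (hrows ▸ h4) hsub (hsyms ▸ h6) h7' (by rw [hrows, hsyms, hcard]; omega)
        exact ⟨l', a, b, c, d, by simp at hlen; omega⟩
    · -- symbol line of e is new
      push_neg at hc1; obtain ⟨e, he, he1, he2, he3⟩ := hc1
      have heS : e.2.2 ∈ S := hRCS.1 _ he (h4 he1) (h5 he2)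
      have hgood : RevGood L (e :: l) := by
        refine RevGood.cons he hg ((2 : Fin 3), e.2.2) ((onLine_sym e _).2 rfl) ?_
        intro f hf hon
        exact he3 (mem_symsOf.2 ⟨f, hf, (onLine_sym f _).1 hon⟩)
      have hrows : rowsOf (e :: l) = rowsOf l := by
        rw [rowsOf_cons, Finset.insert_eq_self.2 he1]
      have hcols : colsOf (e :: l) = colsOf l := by
        rw [colsOf_cons, Finset.insert_eq_self.2 he2]
      have hsyms : symsOf (e :: l) = insert e.2.2 (symsOf l) := symsOf_cons
      have hcard : (symsOf (e :: l)).card = (symsOf l).card + 1 := by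
        rw [hsyms, Finset.card_insert_of_notMem he3]
      have hsub : symsOf (e :: l) ⊆ S := by
        rw [hsyms]; exact Finset.insert_subset heS h6
      have hle : (symsOf (e :: l)).card ≤ S.card := Finset.card_le_card hsub
      have h7' : ¬ rowsOf (e :: l) ⊆ R₀ := by rw [hrows]; exact h7
      obtain ⟨l', a, b, c, d, hlen⟩ := ih (e :: l) hgood (hrows ▸ h1) (hcols ▸ h2)
        (hsyms ▸ (h3.trans (Finset.subset_insert _ _)))
        (hrows ▸ h4) (hcols ▸ h5) hsub h7' (by rw [hrows, hcols, hcard]; omega)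
      exact ⟨l', a, b, c, d, by simp at hlen; omega⟩


lemma main_lemma (hn : 2 ≤ n) (hL : IsLatin L) :
    ∀ m : ℕ, ∀ R C S : Finset (Fin n), ClosedT L R C S →
    R.card = m → C.card = m → S.card = m → 1 ≤ m →
    ∃ l : List (Entry (Fin n)), RevGood L l ∧ rowsOf l = R ∧ colsOf l = C ∧
      symsOf l = S ∧ 3 * m ≤ l.length + 2 + Nat.log 2 m := by
  intro m
  induction m using Nat.strong_induction_on with
  | _ m IH =>
  intro R C S hcl hR hC hS hm
  obtain ⟨r, hr⟩ : R.Nonempty := Finset.card_pos.1 (by omega)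
  obtain ⟨c, hc⟩ : C.Nonempty := Finset.card_pos.1 (by omega)
  by_cases hm1 : m = 1
  · -- base case
    subst hm1
    refine ⟨[(r, c, sy hL r c)], ?_, ?_, ?_, ?_, ?_⟩
    · exact RevGood.cons (sy_mem hL r c) RevGood.nil ((0 : Fin 3), r)
        ((onLine_row _ _).2 rfl) (by simp)
    · have : R = {r} := Finset.eq_singleton_iff_unique_mem.2
        ⟨hr, fun x hx => by
          have := Finset.card_le_one.1 (le_of_eq hR) x hx r hr; exact this⟩
      simp [rowsOf, this]
    · have : C = {c} := Finset.eq_singleton_iff_unique_mem.2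
        ⟨hc, fun x hx => Finset.card_le_one.1 (le_of_eq hC) x hx c hc⟩
      simp [colsOf, this]
    · have hsS : sy hL r c ∈ S := hcl.1 _ (sy_mem hL r c) hr hc
      have : S = {sy hL r c} := Finset.eq_singleton_iff_unique_mem.2
        ⟨hsS, fun x hx => Finset.card_le_one.1 (le_of_eq hS) x hx _ hsS⟩
      simp [symsOf, this]
    · simp
  · have hm2 : 2 ≤ m := by omega
    -- the family of proper closed nonempty subtriples
    set P : ℕ → Prop := fun t => ∃ A B D : Finset (Fin n), ClosedT L A B D ∧
      A ⊆ R ∧ B ⊆ C ∧ D ⊆ S ∧ A.Nonempty ∧ B.Nonempty ∧ D.Nonempty ∧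
      ¬(A = R ∧ B = C ∧ D = S) ∧ A.card + B.card + D.card = t with hP
    haveI : DecidablePred P := fun _ => Classical.propDecidable _
    have hsS : sy hL r c ∈ S := hcl.1 _ (sy_mem hL r c) hr hc
    have hP3 : P 3 := by
      refine ⟨{r}, {c}, {sy hL r c}, singleton_closed hL (sy_mem hL r c),
        Finset.singleton_subset_iff.2 hr, Finset.singleton_subset_iff.2 hc,
        Finset.singleton_subset_iff.2 hsS, Finset.singleton_nonempty _,
        Finset.singleton_nonempty _, Finset.singleton_nonempty _, ?_, by simp⟩
      rintro ⟨hA, -, -⟩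
      rw [← hA] at hR
      simp at hR; omega
    have hbound : ∀ t, P t → t ≤ 3 * m := by
      rintro t ⟨A, B, D, -, hA, hB, hD, -, -, -, -, hsum⟩
      have := Finset.card_le_card hA
      have := Finset.card_le_card hB
      have := Finset.card_le_card hD
      omega
    have h3m : (3 : ℕ) ≤ 3 * m := by omega
    obtain ⟨R₀, C₀, S₀, hcl₀, hR₀R, hC₀C, hS₀S, hR₀ne, hC₀ne, hS₀ne, hne₀, hsum₀⟩ :
        P (Nat.findGreatest P (3 * m)) := Nat.findGreatest_spec h3m hP3
    have hmax : ∀ t, P t → t ≤ Nat.findGreatest P (3 * m) := fun t ht =>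
      Nat.le_findGreatest (hbound t ht) ht
    -- cards of the base triple
    obtain ⟨had, hbd⟩ := closed_cards hL hcl₀ hR₀ne hC₀ne
    set m₀ := S₀.card with hm₀
    have hR₀card : R₀.card = m₀ := had
    have hC₀card : C₀.card = m₀ := hbd
    have hm₀1 : 1 ≤ m₀ := Finset.card_pos.2 hS₀ne
    have hm₀m : m₀ < m := by
      rcases lt_or_eq_of_le (Finset.card_le_card hS₀S) with h | h
      · omega
      · exfalso
        apply hne₀
        refine ⟨?_, ?_, ?_⟩
        · exact Finset.eq_of_subset_of_card_le hR₀R (by omega)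
        · exact Finset.eq_of_subset_of_card_le hC₀C (by omega)
        · exact Finset.eq_of_subset_of_card_le hS₀S (by omega)
    -- a new row
    obtain ⟨r', hr'R, hr'R₀⟩ : ∃ x, x ∈ R ∧ x ∉ R₀ := by
      by_contra h
      push_neg at h
      have : R ⊆ R₀ := fun x hx => h x hx
      have := Finset.card_le_card this
      omega
    -- symbols of row r' over C₀ are outside S₀
    have hout : ∀ x ∈ C₀, sy hL r' x ∈ S \ S₀ := by
      intro x hx
      refine Finset.mem_sdiff.2 ⟨hcl.1 _ (sy_mem hL r' x) hr'R (hC₀C hx), fun hmem => ?_⟩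
      exact hr'R₀ (hcl₀.2.2 _ (sy_mem hL r' x) hx hmem)
    -- doubling
    have hdouble : 2 * m₀ ≤ m := by
      have hinj : C₀.card ≤ (S \ S₀).card := by
        apply Finset.card_le_card_of_injOn (fun x => sy hL r' x) hout
        intro x hx y hy hxy
        have := eq_rs hL (sy_mem hL r' x) (sy_mem hL r' y) rfl hxy
        simpa using congrArg (fun e => e.2.1) this
      rw [Finset.card_sdiff_of_subset hS₀S] at hinj
      omega
    -- apply induction hypothesis
    obtain ⟨l₀, hg₀, hrows₀, hcols₀, hsyms₀, hlen₀⟩ :=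
      IH m₀ hm₀m R₀ C₀ S₀ hcl₀ hR₀card hC₀card rfl hm₀1
    -- the first new entry
    obtain ⟨c₀, hc₀⟩ := id hC₀ne
    set e₁ : Entry (Fin n) := (r', c₀, sy hL r' c₀) with he₁
    have he₁L : e₁ ∈ L := sy_mem hL r' c₀
    have hs₁ : sy hL r' c₀ ∈ S \ S₀ := hout c₀ hc₀
    have hg₁ : RevGood L (e₁ :: l₀) := by
      refine RevGood.cons he₁L hg₀ ((0 : Fin 3), r') ((onLine_row _ _).2 rfl) ?_
      intro f hf hon
      have : f.1 ∈ R₀ := hrows₀ ▸ mem_rowsOf.2 ⟨f, hf, rfl⟩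
      exact hr'R₀ (((onLine_row f _).1 hon) ▸ this)
    have hrows₁ : rowsOf (e₁ :: l₀) = insert r' R₀ := by rw [rowsOf_cons, hrows₀]
    have hcols₁ : colsOf (e₁ :: l₀) = C₀ := by
      rw [colsOf_cons, hcols₀]; exact Finset.insert_eq_self.2 hc₀
    have hsyms₁ : symsOf (e₁ :: l₀) = insert (sy hL r' c₀) S₀ := by rw [symsOf_cons, hsyms₀]
    -- minimality for ext_lemma
    have hmin : ∀ A B D : Finset (Fin n), ClosedT L A B D → R₀ ⊆ A → C₀ ⊆ B → S₀ ⊆ D →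
        A ⊆ R → B ⊆ C → D ⊆ S → (A = R₀ ∧ B = C₀ ∧ D = S₀) ∨ (A = R ∧ B = C ∧ D = S) := by
      intro A B D hclA h1 h2 h3 h4 h5 h6
      by_cases htarget : A = R ∧ B = C ∧ D = S
      · exact Or.inr htarget
      · left
        have hPt : P (A.card + B.card + D.card) :=
          ⟨A, B, D, hclA, h4, h5, h6, Finset.Nonempty.mono h1 hR₀ne, Finset.Nonempty.mono h2 hC₀ne, Finset.Nonempty.mono h3 hS₀ne, htarget, rfl⟩
        have hle := hmax _ hPt
        have e1 := Finset.card_le_card h1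
        have e2 := Finset.card_le_card h2
        have e3 := Finset.card_le_card h3
        refine ⟨(Finset.eq_of_subset_of_card_le h1 (by omega)).symm,
          (Finset.eq_of_subset_of_card_le h2 (by omega)).symm,
          (Finset.eq_of_subset_of_card_le h3 (by omega)).symm⟩
    -- apply the extension lemma
    have hr'insert : r' ∈ insert r' R₀ := Finset.mem_insert_self _ _
    have hcard_rows : (insert r' R₀).card = m₀ + 1 := by
      rw [Finset.card_insert_of_notMem hr'R₀, hR₀card]
    have hcard_syms : (insert (sy hL r' c₀) S₀).card = m₀ + 1 := by
      rw [Finset.card_insert_of_notMem (fun h => (Finset.mem_sdiff.1 hs₁).2 h)]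
    obtain ⟨l', hg', hrows', hcols', hsyms', hlen'⟩ := ext_lemma hn hL hcl hmin
      ((m - (m₀+1)) + (m - m₀) + (m - (m₀+1))) (e₁ :: l₀) hg₁
      (hrows₁ ▸ Finset.subset_insert _ _) (hcols₁ ▸ Finset.Subset.refl _)
      (hsyms₁ ▸ Finset.subset_insert _ _)
      (hrows₁ ▸ Finset.insert_subset hr'R hR₀R) (hcols₁ ▸ hC₀C)
      (hsyms₁ ▸ Finset.insert_subset (Finset.mem_sdiff.1 hs₁).1 hS₀S)
      (by rw [hrows₁]; intro hx; exact hr'R₀ (hx hr'insert))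
      (by rw [hrows₁, hcols₁, hsyms₁, hcard_rows, hcard_syms, hC₀card, hR, hC, hS])
    refine ⟨l', hg', hrows', hcols', hsyms', ?_⟩
    -- length arithmetic
    have hlog : Nat.log 2 m₀ + 1 ≤ Nat.log 2 m := by
      have h1 : Nat.log 2 (m₀ * 2) = Nat.log 2 m₀ + 1 :=
        Nat.log_mul_base (by norm_num) (by omega)
      have h2 : Nat.log 2 (m₀ * 2) ≤ Nat.log 2 m := Nat.log_mono_right (by omega)
      omega
    have hlen₁ : (e₁ :: l₀).length = l₀.length + 1 := by simp
    omega

lemma upper_bound (hn : 2 ≤ n) (hL : IsLatin L) :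
    lbHL L + 3 * n ≤ n ^ 2 + 2 + Nat.log 2 n := by
  have huniv_card : (Finset.univ : Finset (Fin n)).card = n := by simp
  have hcl : ClosedT L Finset.univ Finset.univ Finset.univ :=
    ⟨fun _ _ _ _ => Finset.mem_univ _, fun _ _ _ _ => Finset.mem_univ _,
     fun _ _ _ _ => Finset.mem_univ _⟩
  obtain ⟨l, hg, -, -, -, hlen⟩ := main_lemma hn hL n Finset.univ Finset.univ Finset.univ
    hcl huniv_card huniv_card huniv_card (by omega)
  set k := l.length with hk
  have hnodup := hg.nodup
  have htf : l.toFinset ⊆ L := fun x hx => hg.subset x (List.mem_toFinset.1 hx)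
  have htfcard : l.toFinset.card = k := by
    rw [List.toFinset_card_of_nodup hnodup]
  have hkn : k ≤ n ^ 2 := by
    have := Finset.card_le_card htf
    rw [htfcard, card_L hL] at this
    exact this
  set Sb := L \ l.toFinset with hSb
  have hSbcard : Sb.card = n ^ 2 - k := by
    rw [hSb, Finset.card_sdiff_of_subset htf, htfcard, card_L hL]
  have hlazy : IsLazyBurningSetHL L Sb := by
    constructor
    · exact Finset.sdiff_subset
    · intro e he
      by_cases hmem : e ∈ l
      · exact burn_all hn hL hg e hmem
      · exact BurnedHL.init (Finset.mem_sdiff.2 ⟨he, fun hx => hmem (List.mem_toFinset.1 hx)⟩)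
  have hlb : lbHL L ≤ n ^ 2 - k := by
    rw [← hSbcard]
    exact Nat.sInf_le ⟨Sb, hlazy, rfl⟩
  omega

end Upper


section Lower
variable {n : ℕ} {L S : Finset (Entry (Fin n))}

def burnedN (L S : Finset (Entry (Fin n))) : ℕ → Entry (Fin n) → Prop
  | 0, e => e ∈ S
  | (m+1), e => burnedN L S m e ∨ ∃ ℓ : Line (Fin n), e ∈ L ∧ onLine e ℓ ∧
      ∀ f ∈ L, onLine f ℓ → f ≠ e → burnedN L S m f

lemma burnedN_mono : ∀ {m m' : ℕ}, m ≤ m' → ∀ {e : Entry (Fin n)},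
    burnedN L S m e → burnedN L S m' e := by
  intro m m' h
  induction h with
  | refl => exact fun h => h
  | step _ ih => exact fun h => Or.inl (ih h)

open Classical in
noncomputable def dOf (L S : Finset (Entry (Fin n))) (f : Entry (Fin n)) : ℕ :=
  if h : ∃ m, burnedN L S m f then Nat.find h else 0

open Classical in
lemma dOf_def (L S : Finset (Entry (Fin n))) (f : Entry (Fin n)) :
    dOf L S f = if h : ∃ m, burnedN L S m f then Nat.find h else 0 := rfl

open Classical in
lemma dOf_spec {f : Entry (Fin n)} (h : ∃ m, burnedN L S m f) :
    burnedN L S (dOf L S f) f := by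
  rw [dOf_def, dif_pos h]
  exact Nat.find_spec h

open Classical in
lemma dOf_min {f : Entry (Fin n)} {m : ℕ} (h : burnedN L S m f) : dOf L S f ≤ m := by
  rw [dOf_def, dif_pos ⟨m, h⟩]
  exact Nat.find_min' _ h

lemma exists_burnedN {e : Entry (Fin n)} (h : BurnedHL L S e) : ∃ m, burnedN L S m e := by
  induction h with
  | init h => exact ⟨0, h⟩
  | @prop e ℓ he hon hcard hall ih =>
    set M := (L.filter (fun f => onLine f ℓ ∧ f ≠ e)).sup (dOf L S) with hM
    refine ⟨M + 1, Or.inr ⟨ℓ, he, hon, ?_⟩⟩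
    intro f hf h1 h2
    have hex := ih f hf h1 h2
    have hdf : dOf L S f ≤ M :=
      Finset.le_sup (Finset.mem_filter.2 ⟨hf, h1, h2⟩)
    exact burnedN_mono hdf (dOf_spec hex)

lemma witness_line {e : Entry (Fin n)} (heS : e ∉ S) (hb : ∃ m, burnedN L S m e) :
    ∃ ℓ : Line (Fin n), onLine e ℓ ∧ ∀ f ∈ L, onLine f ℓ → f ≠ e →
      (∃ m, burnedN L S m f) ∧ dOf L S f < dOf L S e := by
  have hspec := dOf_spec hb
  have hpos : dOf L S e ≠ 0 := by
    intro h0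
    rw [h0] at hspec
    exact heS hspec
  obtain ⟨k, hk⟩ : ∃ k, dOf L S e = k + 1 := ⟨dOf L S e - 1, by omega⟩
  rw [hk] at hspec
  rcases hspec with h | ⟨ℓ, he, hon, hall⟩
  · exfalso
    have := dOf_min h
    omega
  · refine ⟨ℓ, hon, ?_⟩
    intro f hf h1 h2
    have hbf := hall f hf h1 h2
    exact ⟨⟨k, hbf⟩, by have := dOf_min hbf; omega⟩

inductive BurnList (L S : Finset (Entry (Fin n))) : List (Entry (Fin n)) → Prop
  | nil : BurnList L S []
  | cons {e : Entry (Fin n)} {l : List (Entry (Fin n))} (he : e ∈ L) (heS : e ∉ S)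
      (hl : BurnList L S l) (ℓ : Line (Fin n)) (h1 : onLine e ℓ)
      (h2 : ∀ f ∈ L, onLine f ℓ → f ≠ e → f ∈ S ∨ f ∈ l) : BurnList L S (e :: l)

lemma burnlist_of_sorted (hlazy : ∀ e ∈ L, BurnedHL L S e) :
    ∀ l : List (Entry (Fin n)), (∀ e ∈ l, e ∈ L ∧ e ∉ S) →
    l.Pairwise (fun a b => dOf L S b ≤ dOf L S a) →
    (∀ f ∈ L, f ∉ S → f ∉ l → ∀ e ∈ l, dOf L S e ≤ dOf L S f) →
    BurnList L S l := by
  intro l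
  induction l with
  | nil => intro _ _ _; exact BurnList.nil
  | cons e t ih =>
    intro hmem hpair hJ
    have heL : e ∈ L := (hmem e (List.mem_cons_self)).1
    have heS : e ∉ S := (hmem e (List.mem_cons_self)).2
    have hpair' := List.pairwise_cons.1 hpair
    obtain ⟨ℓ, hon, hprop⟩ := witness_line heS (exists_burnedN (hlazy e heL))
    refine BurnList.cons heL heS ?_ ℓ hon ?_
    · refine ih (fun x hx => hmem x (List.mem_cons_of_mem _ hx)) hpair'.2 ?_
      intro f hf hfS hft x hx
      by_cases hfe : f = e
      · exact hfe ▸ hpair'.1 x hx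
      · have : f ∉ e :: t := by
          intro hmem'
          rcases List.mem_cons.1 hmem' with h | h
          · exact hfe h
          · exact hft h
        exact hJ f hf hfS this x (List.mem_cons_of_mem _ hx)
    · intro f hf h1 h2
      by_cases hfS : f ∈ S
      · exact Or.inl hfS
      · right
        by_contra hft
        have hfcons : f ∉ e :: t := by
          intro hmem'
          rcases List.mem_cons.1 hmem' with h | h
          · exact h2 h
          · exact hft h
        have := hJ f hf hfS hfcons e (List.mem_cons_self)
        have := (hprop f hf h1 h2).2
        omega

lemma exists_burnlist (hlazy : ∀ e ∈ L, BurnedHL L S e) :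
    ∃ l : List (Entry (Fin n)), BurnList L S l ∧ l.Nodup ∧
      l.length = (L \ S).card ∧ ∀ e, e ∈ l ↔ e ∈ L \ S := by
  classical
  set l₀ := (L \ S).toList.mergeSort (fun a b => decide (dOf L S b ≤ dOf L S a)) with hl₀
  have hperm : l₀.Perm (L \ S).toList := List.mergeSort_perm _ _
  have hmem : ∀ e, e ∈ l₀ ↔ e ∈ L \ S := by
    intro e
    rw [hperm.mem_iff, Finset.mem_toList]
  have hnodup : l₀.Nodup := hperm.nodup_iff.2 (Finset.nodup_toList _)
  have hlen : l₀.length = (L \ S).card := by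
    rw [hperm.length_eq, Finset.length_toList]
  refine ⟨l₀, ?_, hnodup, hlen, hmem⟩
  apply burnlist_of_sorted hlazy
  · intro e he
    have := (hmem e).1 he
    rw [Finset.mem_sdiff] at this
    exact this
  · have hp : ((L \ S).toList.mergeSort
        (fun a b => decide (dOf L S b ≤ dOf L S a))).Pairwise
        (fun a b => dOf L S b ≤ dOf L S a) := by
      have := List.pairwise_mergeSort (le := fun a b => decide (dOf L S b ≤ dOf L S a))
        (fun a b c => by simp; omega) (fun a b => by simp; omega) (L \ S).toList
      simpa using this
    rw [hl₀]
    exact hp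
  · intro f hf hfS hfl x hx
    exact absurd ((hmem f).2 (Finset.mem_sdiff.2 ⟨hf, hfS⟩)) hfl

lemma count_lines :
    ∀ l : List (Entry (Fin n)), BurnList L S l → l.Nodup →
    ∃ U : Finset (Line (Fin n)), U.card = l.length ∧
      ∀ m ∈ U, ∀ f ∈ L, onLine f m → f ∈ S ∨ f ∈ l := by
  intro l hb
  induction hb with
  | nil => intro _; exact ⟨∅, by simp, by simp⟩
  | @cons e t he heS hl ℓ h1 h2 ih =>
    intro hnodup
    rw [List.nodup_cons] at hnodup
    obtain ⟨U, hUcard, hU⟩ := ih hnodup.2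
    have hℓU : ℓ ∉ U := by
      intro hmem
      rcases hU ℓ hmem e he h1 with h | h
      · exact heS h
      · exact hnodup.1 h
    refine ⟨insert ℓ U, ?_, ?_⟩
    · rw [Finset.card_insert_of_notMem hℓU, hUcard]; simp
    · intro m hm f hf hon
      rcases Finset.mem_insert.1 hm with rfl | hm
      · by_cases hfe : f = e
        · exact Or.inr (hfe ▸ List.mem_cons_self)
        · rcases h2 f hf hon hfe with h | h
          · exact Or.inl h
          · exact Or.inr (List.mem_cons_of_mem _ h)
      · rcases hU m hm f hf hon with h | h
        · exact Or.inl h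
        · exact Or.inr (List.mem_cons_of_mem _ h)

lemma linesThrough_card {a b : Entry (Fin n)} (hL : IsLatin L) (ha : a ∈ L) (hb : b ∈ L)
    (hab : a ≠ b) :
    5 ≤ (({((0 : Fin 3), a.1), ((1 : Fin 3), a.2.1), ((2 : Fin 3), a.2.2)} ∪
      {((0 : Fin 3), b.1), ((1 : Fin 3), b.2.1), ((2 : Fin 3), b.2.2)} :
      Finset (Line (Fin n)))).card := by
  set Va : Finset (Line (Fin n)) := {((0 : Fin 3), a.1), ((1 : Fin 3), a.2.1), ((2 : Fin 3), a.2.2)} with hVa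
  set Vb : Finset (Line (Fin n)) := {((0 : Fin 3), b.1), ((1 : Fin 3), b.2.1), ((2 : Fin 3), b.2.2)} with hVb
  have hcardVa : Va.card = 3 := by
    rw [hVa]
    rw [Finset.card_insert_of_notMem (by simp [Prod.ext_iff]),
      Finset.card_insert_of_notMem (by simp [Prod.ext_iff]), Finset.card_singleton]
  have hcardVb : Vb.card = 3 := by
    rw [hVb]
    rw [Finset.card_insert_of_notMem (by simp [Prod.ext_iff]),
      Finset.card_insert_of_notMem (by simp [Prod.ext_iff]), Finset.card_singleton]
  have hinter : (Va ∩ Vb).card ≤ 1 := by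
    have hshape : ∀ x ∈ Va ∩ Vb,
        (x = ((0 : Fin 3), a.1) ∧ a.1 = b.1) ∨
        (x = ((1 : Fin 3), a.2.1) ∧ a.2.1 = b.2.1) ∨
        (x = ((2 : Fin 3), a.2.2) ∧ a.2.2 = b.2.2) := by
      intro x hx
      rw [Finset.mem_inter] at hx
      obtain ⟨hxa, hxb⟩ := hx
      rw [hVa] at hxa
      rw [hVb] at hxb
      simp only [Finset.mem_insert, Finset.mem_singleton] at hxa hxb
      rcases hxa with rfl | rfl | rfl
      · left
        refine ⟨rfl, ?_⟩
        rcases hxb with h | h | h <;> simp only [Prod.mk.injEq] at h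
        · exact h.2
        · exact absurd h.1 (by decide)
        · exact absurd h.1 (by decide)
      · right; left
        refine ⟨rfl, ?_⟩
        rcases hxb with h | h | h <;> simp only [Prod.mk.injEq] at h
        · exact absurd h.1 (by decide)
        · exact h.2
        · exact absurd h.1 (by decide)
      · right; right
        refine ⟨rfl, ?_⟩
        rcases hxb with h | h | h <;> simp only [Prod.mk.injEq] at h
        · exact absurd h.1 (by decide)
        · exact absurd h.1 (by decide)
        · exact h.2
    apply Finset.card_le_one.2
    intro x hx y hy
    rcases hshape x hx with ⟨hx1, hex⟩ | ⟨hx1, hex⟩ | ⟨hx1, hex⟩ <;>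
      rcases hshape y hy with ⟨hy1, hey⟩ | ⟨hy1, hey⟩ | ⟨hy1, hey⟩ <;>
      subst hx1 <;> subst hy1 <;>
      first
        | rfl
        | exact absurd (eq_rc hL ha hb hex hey) hab
        | exact absurd (eq_rc hL ha hb hey hex) hab
        | exact absurd (eq_rs hL ha hb hex hey) hab
        | exact absurd (eq_rs hL ha hb hey hex) hab
        | exact absurd (eq_cs hL ha hb hex hey) hab
        | exact absurd (eq_cs hL ha hb hey hex) hab
  have := Finset.card_union_add_card_inter Va Vb
  omega

lemma lower_bound (hn : 2 ≤ n) (hL : IsLatin L)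
    (hlazy : IsLazyBurningSetHL L S) : n ^ 2 + 3 ≤ S.card + 3 * n := by
  classical
  obtain ⟨l, hbl, hnodup, hlen, hmem⟩ := exists_burnlist hlazy.2
  have hScard : S.card + l.length = n ^ 2 := by
    rw [hlen, Finset.card_sdiff_of_subset hlazy.1, card_L hL]
    have := Finset.card_le_card hlazy.1
    rw [card_L hL] at this
    omega
  match l, hbl, hnodup, hmem, hScard with
  | [], _, _, _, hScard => simp at hScard; omega
  | [a], _, _, _, hScard =>
    simp only [List.length_singleton] at hScard
    omega
  | (a :: b :: t), hbl, hnodup, hmem, hScard =>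
    have haL : a ∈ L := ((Finset.mem_sdiff.1 ((hmem a).1 (by simp))).1)
    have haS : a ∉ S := ((Finset.mem_sdiff.1 ((hmem a).1 (by simp))).2)
    have hbL : b ∈ L := ((Finset.mem_sdiff.1 ((hmem b).1 (by simp))).1)
    have hbS : b ∉ S := ((Finset.mem_sdiff.1 ((hmem b).1 (by simp))).2)
    rw [List.nodup_cons, List.nodup_cons] at hnodup
    have hab : a ≠ b := fun h => hnodup.1 (h ▸ List.mem_cons_self)
    have hat : a ∉ t := fun h => hnodup.1 (List.mem_cons_of_mem _ h)
    have hbt : b ∉ t := hnodup.2.1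
    -- burn list for t
    have hblt : BurnList L S t := by
      rcases hbl with _ | ⟨_, _, hbl', _, _, _⟩
      rcases hbl' with _ | ⟨_, _, hbl'', _, _, _⟩
      exact hbl''
    obtain ⟨U, hUcard, hU⟩ := count_lines t hblt hnodup.2.2
    set V : Finset (Line (Fin n)) :=
      ({((0 : Fin 3), a.1), ((1 : Fin 3), a.2.1), ((2 : Fin 3), a.2.2)} ∪
       {((0 : Fin 3), b.1), ((1 : Fin 3), b.2.1), ((2 : Fin 3), b.2.2)}) with hV
    have hVcard : 5 ≤ V.card := linesThrough_card hL haL hbL hab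
    have hdisj : Disjoint U V := by
      rw [Finset.disjoint_right]
      intro m hmV hmU
      have : (onLine a m) ∨ (onLine b m) := by
        rw [hV] at hmV
        rcases Finset.mem_union.1 hmV with h | h <;>
          simp only [Finset.mem_insert, Finset.mem_singleton] at h <;>
          [left; right] <;>
          rw [onLine_iff] <;> tauto
      rcases this with h | h
      · rcases hU m hmU a haL h with h' | h'
        · exact haS h'
        · exact hat h'
      · rcases hU m hmU b hbL h with h' | h'
        · exact hbS h'
        · exact hbt h'
    have hunion : (U ∪ V).card = U.card + V.card := Finset.card_union_of_disjoint hdisj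
    have htotal : (U ∪ V).card ≤ 3 * n := by
      have : (U ∪ V).card ≤ Fintype.card (Line (Fin n)) := Finset.card_le_univ _
      simpa [Fintype.card_prod] using this
    simp only [List.length_cons] at hScard
    rw [hUcard] at hunion
    omega

lemma lbHL_lower (hn : 2 ≤ n) (hL : IsLatin L) : n ^ 2 + 3 ≤ lbHL L + 3 * n := by
  have hne : {k | ∃ S : Finset (Entry (Fin n)), IsLazyBurningSetHL L S ∧ S.card = k}.Nonempty :=
    ⟨L.card, L, ⟨Finset.Subset.refl _, fun e _ => BurnedHL.init ‹_›⟩, rfl⟩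
  obtain ⟨S₀, hS₀, hcard⟩ := Nat.sInf_mem hne
  rw [lbHL, ← hcard]
  exact lower_bound hn hL hS₀

end Lower

end LSB
theorem stmt10 {n : ℕ} (hn : 2 ≤ n) (L : Finset (Entry (Fin n))) (hL : IsLatin L) :
    (n : ℤ) ^ 2 - 3 * n + 3 ≤ (lbHL L : ℤ) ∧
      (lbHL L : ℤ) ≤ (n : ℤ) ^ 2 - 3 * n + 2 + Nat.log 2 n := by
  have h1 := LSB.lbHL_lower hn hL
  have h2 := LSB.upper_bound hn hL
  have h1' : ((n ^ 2 + 3 : ℕ) : ℤ) ≤ ((lbHL L + 3 * n : ℕ) : ℤ) := Nat.cast_le.2 h1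
  have h2' : ((lbHL L + 3 * n : ℕ) : ℤ) ≤ ((n ^ 2 + 2 + Nat.log 2 n : ℕ) : ℤ) := Nat.cast_le.2 h2
  push_cast at h1' h2'
  constructor <;> linarith
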